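/- Let A be a unital C*-algebra, let n ≥ 1, and let a₁, …, aₙ ∈ A be contractions. The following are equivalent: (1) for every ε > 0 there exist b₁, …, bₙ ∈ A with ‖aᵢ − bᵢ‖ < ε for all i and x₁, …, xₙ ∈ A with x₁b₁ + ⋯ + xₙbₙ = 1 (that is, (a₁, …, aₙ) is a limit of tuples that generate A as an ideal); (2) for every ε > 0 there exist contractions v₁, …, vₙ ∈ A and a positive element c ∈ A with ‖c‖ ≤ √n such that ‖aᵢ − vᵢc‖ < ε for all i and ‖v₁*v₁ + ⋯ + vₙ*vₙ − 1‖ < ε; (3) for every ε > 0 there exist contractions v₁, …, vₙ ∈ A and a positive element c ∈ A with ‖c‖ ≤ √n such that ‖aᵢ − vᵢc‖ < ε for all i and ‖v₁*v₁ + ⋯ + vₙ*vₙ − 1‖ < 1. -/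

import Mathlib

open CFC Finset
open scoped NNReal

section Aux

variable {A : Type*} [CStarAlgebra A] [PartialOrder A] [StarOrderedRing A]

private lemma rsmul_nonneg' {r : ℝ} (hr : 0 ≤ r) {a : A} (ha : 0 ≤ a) : 0 ≤ r • a := by
  have hsa : IsSelfAdjoint (CFC.sqrt a) := IsSelfAdjoint.of_nonneg (CFC.sqrt_nonneg _)
  have : r • a = star (Real.sqrt r • CFC.sqrt a) * (Real.sqrt r • CFC.sqrt a) := by
    rw [star_smul, star_trivial, hsa.star_eq, smul_mul_smul_comm, Real.mul_self_sqrt hr,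
      CFC.sqrt_mul_sqrt_self a ha]
  rw [this]
  exact star_mul_self_nonneg _

private lemma rsmul_mono' {r : ℝ} (hr : 0 ≤ r) {a b : A} (h : a ≤ b) : r • a ≤ r • b := by
  rw [← sub_nonneg, ← smul_sub]
  exact rsmul_nonneg' hr (sub_nonneg.2 h)

private lemma star_sum_mul_le {n : ℕ} (f : Fin n → A) :
    star (∑ i, f i) * (∑ i, f i) ≤ n • ∑ i, star (f i) * f i := by
  set S := ∑ i, f i with hS
  set T := ∑ i, star (f i) * f i with hT
  have h0 : (0:A) ≤ ∑ i : Fin n, ∑ j : Fin n, star (f i - f j) * (f i - f j) :=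
    Finset.sum_nonneg fun i _ => Finset.sum_nonneg fun j _ => star_mul_self_nonneg _
  have key : ∑ i : Fin n, ∑ j : Fin n, star (f i - f j) * (f i - f j)
      = (n • T - star S * S) + (n • T - star S * S) := by
    have e : ∀ i j : Fin n, star (f i - f j) * (f i - f j)
        = star (f i) * f i - star (f i) * f j - star (f j) * f i + star (f j) * f j := by
      intro i j
      simp only [star_sub, sub_mul, mul_sub]
      abel
    simp only [e, Finset.sum_add_distrib, Finset.sum_sub_distrib, Finset.sum_const,
      Finset.card_univ, Fintype.card_fin, ← Finset.mul_sum, ← Finset.sum_mul, ← star_sum]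
    rw [← Finset.smul_sum]
    abel
  have h1 : (0:A) ≤ (2:ℝ)⁻¹ • (((n • T - star S * S) + (n • T - star S * S))) :=
    rsmul_nonneg' (by norm_num) (key ▸ h0)
  have h2 : (2:ℝ)⁻¹ • (((n • T - star S * S) + (n • T - star S * S)))
      = n • T - star S * S := by
    rw [← two_smul ℝ (n • T - star S * S), smul_smul]
    norm_num
  rw [h2, sub_nonneg] at h1
  exact h1

private lemma algebraMap_mono' {r s : ℝ} (h : r ≤ s) :
    algebraMap ℝ A r ≤ algebraMap ℝ A s := by
  rw [← sub_nonneg, ← map_sub, Algebra.algebraMap_eq_smul_one]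
  exact rsmul_nonneg' (by linarith) zero_le_one

theorem stmt_aux (n : ℕ) (hn : 1 ≤ n)
    (a : Fin n → A) (ha : ∀ i, ‖a i‖ ≤ 1) :
    [ (∀ ε > (0 : ℝ), ∃ b : Fin n → A, (∀ i, ‖a i - b i‖ < ε) ∧
        ∃ x : Fin n → A, ∑ i, x i * b i = 1),
      (∀ ε > (0 : ℝ), ∃ (v : Fin n → A) (c : A), (∀ i, ‖v i‖ ≤ 1) ∧
        (∃ y : A, c = star y * y) ∧ ‖c‖ ≤ Real.sqrt n ∧
        (∀ i, ‖a i - v i * c‖ < ε) ∧ ‖(∑ i, star (v i) * v i) - 1‖ < ε),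
      (∀ ε > (0 : ℝ), ∃ (v : Fin n → A) (c : A), (∀ i, ‖v i‖ ≤ 1) ∧
        (∃ y : A, c = star y * y) ∧ ‖c‖ ≤ Real.sqrt n ∧
        (∀ i, ‖a i - v i * c‖ < ε) ∧ ‖(∑ i, star (v i) * v i) - 1‖ < 1) ].TFAE := by
  tfae_have 1 → 2 := by
    intro h1 ε hε
    set δ : ℝ := ε / 2 with hδdef
    have hδ : 0 < δ := by positivity
    obtain ⟨b, hb, x, hx⟩ := h1 δ hδ
    have h1δ : (0:ℝ) < 1 + δ := by linarith
    set r : ℝ := (1 + δ)⁻¹ with hrdef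
    have hr0 : 0 < r := by positivity
    have hr1 : r ≤ 1 := by
      rw [hrdef]
      rw [inv_le_one_iff₀]; right; linarith
    set b' : Fin n → A := fun i => r • b i with hb'def
    have hbnorm : ∀ i, ‖b i‖ ≤ 1 + δ := by
      intro i
      calc ‖b i‖ = ‖a i - (a i - b i)‖ := by rw [sub_sub_cancel]
        _ ≤ ‖a i‖ + ‖a i - b i‖ := norm_sub_le _ _
        _ ≤ 1 + δ := add_le_add (ha i) (hb i).le
    have hb'norm : ∀ i, ‖b' i‖ ≤ 1 := by
      intro i
      rw [hb'def]
      simp only [norm_smul, Real.norm_eq_abs, abs_of_pos hr0]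
      calc r * ‖b i‖ ≤ r * (1 + δ) := by
            exact mul_le_mul_of_nonneg_left (hbnorm i) hr0.le
        _ = 1 := inv_mul_cancel₀ h1δ.ne'
    have hab' : ∀ i, ‖a i - b' i‖ < ε := by
      intro i
      have : a i - b' i = (a i - b i) + (1 - r) • b i := by
        rw [hb'def]; simp only [sub_smul, one_smul]; abel
      rw [this]
      calc ‖(a i - b i) + (1 - r) • b i‖ ≤ ‖a i - b i‖ + ‖(1 - r) • b i‖ := norm_add_le _ _
        _ < δ + (1 - r) * (1 + δ) := by
            refine add_lt_add_of_lt_of_le (hb i) ?_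
            rw [norm_smul, Real.norm_eq_abs, _root_.abs_of_nonneg (by linarith)]
            exact mul_le_mul_of_nonneg_left (hbnorm i) (by linarith)
        _ ≤ δ + δ := by
            have : (1 - r) * (1 + δ) = δ := by
              rw [sub_mul, one_mul, hrdef, inv_mul_cancel₀ h1δ.ne']; ring
            rw [this]
        _ = ε := by rw [hδdef]; ring
    set x' : Fin n → A := fun i => (1 + δ) • x i with hx'def
    have hgen : ∑ i, x' i * b' i = 1 := by
      rw [← hx]
      refine Finset.sum_congr rfl fun i _ => ?_
      rw [hx'def, hb'def]
      simp only [smul_mul_smul_comm]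
      rw [mul_inv_cancel₀ h1δ.ne', one_smul]
    set d : A := ∑ i, star (b' i) * b' i with hddef
    have hd0 : (0:A) ≤ d := Finset.sum_nonneg fun i _ => star_mul_self_nonneg _
    set K : ℝ := 1 + ∑ i, ‖star (x' i) * x' i‖ with hKdef
    have hK0 : 0 < K := by
      rw [hKdef]
      have : (0:ℝ) ≤ ∑ i, ‖star (x' i) * x' i‖ := Finset.sum_nonneg fun i _ => norm_nonneg _
      linarith
    have hKi : ∀ i, ‖star (x' i) * x' i‖ ≤ K := by
      intro i
      rw [hKdef]
      have := Finset.single_le_sum (f := fun i => ‖star (x' i) * x' i‖)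
        (fun j _ => norm_nonneg _) (Finset.mem_univ i)
      linarith
    have step1 : (1:A) ≤ n • ∑ i, star (x' i * b' i) * (x' i * b' i) := by
      have := star_sum_mul_le (fun i => x' i * b' i)
      rw [hgen] at this
      simpa using this
    have step2 : ∀ i, star (x' i * b' i) * (x' i * b' i) ≤ K • (star (b' i) * b' i) := by
      intro i
      have hsa : star (x' i * b' i) * (x' i * b' i)
          = star (b' i) * (star (x' i) * x' i) * b' i := by
        simp only [star_mul, mul_assoc]
      have hle : star (x' i) * x' i ≤ algebraMap ℝ A K :=
        le_trans (IsSelfAdjoint.le_algebraMap_norm_self (IsSelfAdjoint.star_mul_self _))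
          (algebraMap_mono' (hKi i))
      calc star (x' i * b' i) * (x' i * b' i)
          = star (b' i) * (star (x' i) * x' i) * b' i := hsa
        _ ≤ star (b' i) * algebraMap ℝ A K * b' i := star_left_conjugate_le_conjugate hle _
        _ = K • (star (b' i) * b' i) := by
            rw [Algebra.algebraMap_eq_smul_one]
            simp only [mul_smul_comm, smul_mul_assoc, mul_one]
    have step3 : (1:A) ≤ ((n : ℝ) * K) • d := by
      calc (1:A) ≤ n • ∑ i, star (x' i * b' i) * (x' i * b' i) := step1
        _ ≤ n • (K • d) := by
            rw [← sub_nonneg, ← smul_sub]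
            refine nsmul_nonneg ?_ n
            rw [sub_nonneg, hddef, Finset.smul_sum]
            exact Finset.sum_le_sum fun i _ => step2 i
        _ = ((n : ℝ) * K) • d := by
            rw [← Nat.cast_smul_eq_nsmul ℝ, smul_smul]
    have hnK : (0:ℝ) < (n : ℝ) * K := by
      have : (0:ℝ) < (n:ℝ) := by exact_mod_cast Nat.lt_of_lt_of_le Nat.zero_lt_one hn
      positivity
    have hdu : IsUnit d := by
      refine CStarAlgebra.isUnit_of_le (a := ((n : ℝ) * K)⁻¹ • (1:A)) ?_
        (IsUnit.isStrictlyPositive ?_ (rsmul_nonneg' (by positivity) zero_le_one))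
      rotate_left
      · rw [← Algebra.algebraMap_eq_smul_one]
        exact IsUnit.map (algebraMap ℝ A) (isUnit_iff_ne_zero.2 (by positivity))
      · have := rsmul_mono' (r := ((n : ℝ) * K)⁻¹) (by positivity) step3
        rwa [smul_smul, inv_mul_cancel₀ hnK.ne', one_smul] at this
    have hspec : (0 : ℝ≥0) ∉ spectrum ℝ≥0 d := spectrum.zero_notMem ℝ≥0 hdu
    set t : A := CFC.sqrt d with htdef
    have ht0 : (0:A) ≤ t := CFC.sqrt_nonneg d
    set w : A := d ^ (-(1 / 2) : ℝ) with hwdef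
    have hw0 : (0:A) ≤ w := CFC.rpow_nonneg
    have hwsa : IsSelfAdjoint w := IsSelfAdjoint.of_nonneg hw0
    set v : Fin n → A := fun i => b' i * w with hvdef
    have hwt : w * t = 1 := by
      rw [htdef, CFC.sqrt_eq_rpow, hwdef]
      exact CFC.rpow_neg_mul_rpow (1/2) (hdu.isStrictlyPositive hd0)
    have hvc : ∀ i, v i * t = b' i := by
      intro i
      rw [hvdef]
      simp only [mul_assoc, hwt, mul_one]
    have hsum : ∑ i, star (v i) * v i = 1 := by
      have : ∀ i, star (v i) * v i = w * (star (b' i) * b' i) * w := by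
        intro i
        rw [hvdef]
        simp only [star_mul, hwsa.star_eq, mul_assoc]
      simp only [this, ← Finset.sum_mul, ← Finset.mul_sum]
      rw [← hddef, hwdef]
      exact CFC.conjugate_rpow_neg_one_half d (hdu.isStrictlyPositive hd0)
    have hvle : ∀ i, ‖v i‖ ≤ 1 := by
      intro i
      have h1 : star (v i) * v i ≤ 1 := by
        rw [← hsum]
        exact Finset.single_le_sum (f := fun i => star (v i) * v i)
          (fun j _ => star_mul_self_nonneg _) (Finset.mem_univ i)
      have h2 : ‖star (v i) * v i‖ ≤ 1 :=
        (CStarAlgebra.norm_le_one_iff_of_nonneg _ (star_mul_self_nonneg _)).2 h1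
      rw [CStarRing.norm_star_mul_self] at h2
      rw [← abs_of_nonneg (norm_nonneg (v i))]
      exact abs_le_one_iff_mul_self_le_one.2 h2
    have hy : ∃ y : A, t = star y * y :=
      ⟨CFC.sqrt t, by
        rw [(IsSelfAdjoint.of_nonneg (CFC.sqrt_nonneg _)).star_eq, CFC.sqrt_mul_sqrt_self t ht0]⟩
    have htnorm : ‖t‖ ≤ Real.sqrt n := by
      have h1 : ‖t‖ * ‖t‖ = ‖d‖ := by
        rw [← CStarRing.norm_star_mul_self, (IsSelfAdjoint.of_nonneg ht0).star_eq, htdef,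
          CFC.sqrt_mul_sqrt_self d hd0]
      have h2 : ‖d‖ ≤ (n : ℝ) := by
        rw [hddef]
        calc ‖∑ i, star (b' i) * b' i‖ ≤ ∑ i, ‖star (b' i) * b' i‖ := norm_sum_le _ _
          _ ≤ ∑ _i : Fin n, (1:ℝ) := by
              refine Finset.sum_le_sum fun i _ => ?_
              rw [CStarRing.norm_star_mul_self]
              exact mul_le_one₀ (hb'norm i) (norm_nonneg _) (hb'norm i)
          _ = (n : ℝ) := by simp
      rw [show Real.sqrt (n:ℝ) = Real.sqrt (n:ℝ) from rfl]
      rw [Real.le_sqrt (norm_nonneg t) (Nat.cast_nonneg n), sq, h1]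
      exact h2
    exact ⟨v, t, hvle, hy, htnorm, fun i => by rw [hvc i]; exact hab' i,
      by rw [hsum, sub_self, norm_zero]; exact hε⟩
  tfae_have 2 → 3 := by
    intro h2 ε hε
    obtain ⟨v, c, h₁, h₂, h₃, h₄, h₅⟩ := h2 (min ε 1) (lt_min hε one_pos)
    exact ⟨v, c, h₁, h₂, h₃, fun i => (h₄ i).trans_le (min_le_left _ _),
      h₅.trans_le (min_le_right _ _)⟩
  tfae_have 3 → 1 := by
    intro h3 ε hε
    obtain ⟨v, c, hv, ⟨y, hy⟩, hcn, hclose, hS⟩ := h3 (ε/2) (by positivity)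
    have hc0 : (0:A) ≤ c := hy ▸ star_mul_self_nonneg y
    set s : A := ∑ i, star (v i) * v i with hsdef
    have hSu : IsUnit s := by
      have h' : ‖(1:A) - s‖ < 1 := by rwa [norm_sub_rev] at hS
      simpa [sub_sub_cancel] using (Units.oneSub (1 - s) h').isUnit
    set c' : A := c + (ε/2) • (1:A) with hc'def
    clear_value s
    have hc'u : IsUnit c' := by
      refine CStarAlgebra.isUnit_of_le (a := (ε/2) • (1:A)) (le_add_of_nonneg_left hc0)
        (IsUnit.isStrictlyPositive ?_ (rsmul_nonneg' (by positivity) zero_le_one))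
      rw [← Algebra.algebraMap_eq_smul_one]
      exact IsUnit.map (algebraMap ℝ A) (isUnit_iff_ne_zero.2 (by positivity))
    clear_value c'
    obtain ⟨S, hSval⟩ := hSu
    obtain ⟨C, hCval⟩ := hc'u
    refine ⟨fun i => v i * c', fun i => ?_, fun i => ↑C⁻¹ * (↑S⁻¹ * star (v i)), ?_⟩
    · have : a i - v i * c' = (a i - v i * c) - (ε/2) • v i := by
        rw [hc'def, mul_add, mul_smul_comm, mul_one]
        abel
      rw [this]
      calc ‖(a i - v i * c) - (ε/2) • v i‖ ≤ ‖a i - v i * c‖ + ‖(ε/2) • v i‖ := norm_sub_le _ _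
        _ < ε/2 + ε/2 := by
            refine add_lt_add_of_lt_of_le (hclose i) ?_
            rw [norm_smul, Real.norm_eq_abs, abs_of_pos (by positivity)]
            calc (ε/2) * ‖v i‖ ≤ (ε/2) * 1 := by
                  exact mul_le_mul_of_nonneg_left (hv i) (by positivity)
              _ = ε/2 := mul_one _
        _ = ε := by ring
    · have e1 : ∑ i, (↑C⁻¹ * (↑S⁻¹ * star (v i))) * (v i * c')
          = ↑C⁻¹ * (↑S⁻¹ * (s * c')) := by
        simp only [mul_assoc, ← Finset.mul_sum]
        congr 2
        rw [hsdef, Finset.sum_mul]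
        exact Finset.sum_congr rfl fun i _ => (mul_assoc _ _ _).symm
      rw [e1, ← hSval, ← hCval, Units.inv_mul_cancel_left, Units.inv_mul]
  tfae_finish

end Aux

/-- Approximate version: characterization of tuples in the closure of generating tuples. -/
theorem stmt_1 {A : Type*} [CStarAlgebra A] (n : ℕ) (hn : 1 ≤ n)
    (a : Fin n → A) (ha : ∀ i, ‖a i‖ ≤ 1) :
    [ (∀ ε > (0 : ℝ), ∃ b : Fin n → A, (∀ i, ‖a i - b i‖ < ε) ∧
        ∃ x : Fin n → A, ∑ i, x i * b i = 1),
      (∀ ε > (0 : ℝ), ∃ (v : Fin n → A) (c : A), (∀ i, ‖v i‖ ≤ 1) ∧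
        (∃ y : A, c = star y * y) ∧ ‖c‖ ≤ Real.sqrt n ∧
        (∀ i, ‖a i - v i * c‖ < ε) ∧ ‖(∑ i, star (v i) * v i) - 1‖ < ε),
      (∀ ε > (0 : ℝ), ∃ (v : Fin n → A) (c : A), (∀ i, ‖v i‖ ≤ 1) ∧
        (∃ y : A, c = star y * y) ∧ ‖c‖ ≤ Real.sqrt n ∧
        (∀ i, ‖a i - v i * c‖ < ε) ∧ ‖(∑ i, star (v i) * v i) - 1‖ < 1) ].TFAE := by
  letI := CStarAlgebra.spectralOrder A
  haveI := CStarAlgebra.spectralOrderedRing A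
  exact stmt_aux n hn a ha
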